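/- arXiv:0705.2810 — 4 statements merged into one kernel-verified Lean document; each statement's English description precedes it below -/
import Mathlib

section
/- Let γ ∈ (0,1) and f ∈ C_b(ℝⁿ). Then f ∈ C^γ_d(ℝⁿ) if and only if [f]_{γ,d} := sup{ |f(x)−f(y)| · |||x−y|||^{−γ} : x, y ∈ ℝⁿ, x ≠ y } is finite, i.e. if and only if f is γ-Hölder continuous with respect to the metric d; moreover the norm ‖f‖₀ + [f]_{γ,d} is equivalent on C^γ_d(ℝⁿ) to the norm ‖f‖_{γ,d}. -/
open scoped BigOperators
open MeasureTheory

noncomputable section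

/-- `ℝⁿ` as a Euclidean space. -/
abbrev En (n : ℕ) := EuclideanSpace ℝ (Fin n)

/-- The `i`-th canonical basis vector of `ℝⁿ`. -/
def evec (n : ℕ) (i : Fin n) : En n := EuclideanSpace.single i 1

/-- Action of an `n × n` matrix on `ℝⁿ`. -/
def matVec {n : ℕ} (A : Matrix (Fin n) (Fin n) ℝ) (x : En n) : En n :=
  Matrix.toEuclideanLin A x

/-- `V_m = span{A^j e_i : j ≤ m, i < p̃}`. -/
def kalmanSpan (n : ℕ) (A : Matrix (Fin n) (Fin n) ℝ) (p m : ℕ) : Submodule ℝ (En n) :=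
  Submodule.span ℝ
    {x : En n | ∃ j, j ≤ m ∧ ∃ i : Fin n, (i : ℕ) < p ∧ x = matVec (A ^ j) (evec n i)}

/-- The Kalman condition: the vectors `A^j e_i`, `j ≤ k`, `i < p̃`, span `ℝⁿ` for some `k`. -/
def KalmanCond (n : ℕ) (A : Matrix (Fin n) (Fin n) ℝ) (p : ℕ) : Prop :=
  ∃ k, kalmanSpan n A p k = ⊤

/-- `k` is the smallest nonnegative integer with `V_k = ℝⁿ`. -/
def KalmanSmallest (n : ℕ) (A : Matrix (Fin n) (Fin n) ℝ) (p k : ℕ) : Prop :=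
  kalmanSpan n A p k = ⊤ ∧ ∀ m, m < k → kalmanSpan n A p m ≠ ⊤

/-- `W_0 = V_0` and `W_m` is the orthogonal complement of `V_{m-1}` in `V_m`. -/
def Wspace (n : ℕ) (A : Matrix (Fin n) (Fin n) ℝ) (p : ℕ) : ℕ → Submodule ℝ (En n)
  | 0 => kalmanSpan n A p 0
  | m + 1 => kalmanSpan n A p (m + 1) ⊓ (kalmanSpan n A p m)ᗮ

/-- `E_m`, the orthogonal projection of `ℝⁿ` onto `W_m`. -/
def Eproj (n : ℕ) (A : Matrix (Fin n) (Fin n) ℝ) (p m : ℕ) (x : En n) : En n :=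
  (Submodule.orthogonalProjection (Wspace n A p m) x : En n)

/-- The quasi-norm `|||x||| = Σ_{h=0}^{k} |E_h x|^{1/(2h+1)}`. -/
def qnorm (n : ℕ) (A : Matrix (Fin n) (Fin n) ℝ) (p k : ℕ) (x : En n) : ℝ :=
  ∑ h ∈ Finset.range (k + 1), ‖Eproj n A p h x‖ ^ ((1 : ℝ) / (2 * (h : ℝ) + 1))

/-- Membership, with admissible constant `M`, in the Hölder space `C^s_b(E)` for non-integer
`s ∈ (0,3)`: bounded and `s`-Hölder for `s < 1`; bounded `C¹` with bounded `(s-1)`-Hölder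
derivative for `1 < s < 2`; bounded `C²` with bounded `(s-2)`-Hölder second derivative
for `2 < s < 3`. -/
def MemHolderB {E : Type*} [NormedAddCommGroup E] [NormedSpace ℝ E]
    (s : ℝ) (g : E → ℝ) (M : ℝ) : Prop :=
  if s < 1 then
    (∀ x, |g x| ≤ M) ∧ ∀ x y, |g x - g y| ≤ M * ‖x - y‖ ^ s
  else if s < 2 then
    ContDiff ℝ 1 g ∧ (∀ x, |g x| ≤ M) ∧ (∀ x, ‖fderiv ℝ g x‖ ≤ M) ∧
      ∀ x y, ‖fderiv ℝ g x - fderiv ℝ g y‖ ≤ M * ‖x - y‖ ^ (s - 1)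
  else
    ContDiff ℝ 2 g ∧ (∀ x, |g x| ≤ M) ∧ (∀ x, ‖fderiv ℝ g x‖ ≤ M) ∧
      (∀ x, ‖fderiv ℝ (fderiv ℝ g) x‖ ≤ M) ∧
      ∀ x y, ‖fderiv ℝ (fderiv ℝ g) x - fderiv ℝ (fderiv ℝ g) y‖ ≤ M * ‖x - y‖ ^ (s - 2)

/-- `C_b(ℝⁿ)`: uniformly continuous and bounded. -/
def IsCb (n : ℕ) (f : En n → ℝ) : Prop :=
  UniformContinuous f ∧ ∃ M, ∀ x, |f x| ≤ M

/-- The sup norm `‖f‖₀`, as the least uniform bound. -/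
def supNorm (n : ℕ) (f : En n → ℝ) : ℝ :=
  sInf {M | 0 ≤ M ∧ ∀ x, |f x| ≤ M}

/-- The restriction `w ↦ f (z + w)` of `f (z + ·)` to the subspace `W_m = E_m(ℝⁿ)`. -/
def restrictW (n : ℕ) (A : Matrix (Fin n) (Fin n) ℝ) (p m : ℕ) (f : En n → ℝ) (z : En n) :
    ↥(Wspace n A p m) → ℝ := fun w => f (z + (w : En n))

/-- `M` is an admissible constant for `f` in `C^γ_d(ℝⁿ)`: for every `z` and every `0 ≤ m ≤ k`,
the restriction of `f (z + ·)` to `E_m(ℝⁿ)` lies in `C^{γ/(2m+1)}_b(E_m(ℝⁿ))`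
with constant `M`. -/
def MemCd (n : ℕ) (A : Matrix (Fin n) (Fin n) ℝ) (p k : ℕ) (γ : ℝ) (f : En n → ℝ) (M : ℝ) :
    Prop :=
  ∀ z : En n, ∀ m, m ≤ k → MemHolderB (γ / (2 * (m : ℝ) + 1)) (restrictW n A p m f z) M

/-- `f ∈ C^γ_d(ℝⁿ)`. -/
def InCd (n : ℕ) (A : Matrix (Fin n) (Fin n) ℝ) (p k : ℕ) (γ : ℝ) (f : En n → ℝ) : Prop :=
  IsCb n f ∧ ∃ M, MemCd n A p k γ f M

/-- The norm `‖f‖_{γ,d}`, as the least admissible constant. -/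
def CdNorm (n : ℕ) (A : Matrix (Fin n) (Fin n) ℝ) (p k : ℕ) (γ : ℝ) (f : En n → ℝ) : ℝ :=
  sInf {M | 0 ≤ M ∧ MemCd n A p k γ f M}

/-- First partial (directional) derivative `D_i f`. -/
def pderiv1 (n : ℕ) (i : Fin n) (f : En n → ℝ) (x : En n) : ℝ :=
  deriv (fun t : ℝ => f (x + t • evec n i)) 0

/-- Second partial derivative `D²_{ij} f`. -/
def pderiv2 (n : ℕ) (i j : Fin n) (f : En n → ℝ) (x : En n) : ℝ :=
  pderiv1 n i (pderiv1 n j f) x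

/-- Test functions `φ ∈ C₀^∞(ℝⁿ)`: smooth with compact support. -/
def IsTest (n : ℕ) (φ : En n → ℝ) : Prop :=
  ContDiff ℝ (⊤ : ℕ∞) φ ∧ HasCompactSupport φ

/-- The formal adjoint
`𝒜*φ(x) = ½Tr(Q D²φ(x)) − ⟨Ax+F(x), Dφ(x)⟩ − φ(x)(div F(x) + Tr A)`. -/
def Astar (n : ℕ) (A Q : Matrix (Fin n) (Fin n) ℝ) (F : En n → En n) (φ : En n → ℝ)
    (x : En n) : ℝ :=
  (1 / 2) * (∑ i, ∑ j, Q i j * pderiv2 n i j φ x)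
    - (∑ i, (matVec A x + F x) i * pderiv1 n i φ x)
    - φ x * ((∑ i, pderiv1 n i (fun y => F y i) x) + Matrix.trace A)

/-- Distributional solution of `λu − 𝒜u = f`:
`u ∈ C_b(ℝⁿ)` and `λ∫uφ = ∫u 𝒜*φ + ∫fφ` for every test function `φ`. -/
def IsDistSol (n : ℕ) (A Q : Matrix (Fin n) (Fin n) ℝ) (F : En n → En n) (lam : ℝ)
    (f u : En n → ℝ) : Prop :=
  IsCb n u ∧ ∀ φ : En n → ℝ, IsTest n φ →
    lam * ∫ x, u x * φ x = (∫ x, u x * Astar n A Q F φ x) + ∫ x, f x * φ x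

/-- Space-distributional solution of `∂_t v = 𝒜v + H`, `v(0,·) = g` on `[0,T] × ℝⁿ`:
bounded continuous, equal to `g` at `t = 0`, `v(t,·) ∈ C_b(ℝⁿ)` uniformly in `t ∈ [0,T]`,
and for every test function `φ` the map `t ↦ ∫ v(t,·)φ` is continuously differentiable on
`[0,T]` with derivative `∫ v(t,·)𝒜*φ + ∫ H(t,·)φ`. -/
def IsSpaceDistSol (n : ℕ) (A Q : Matrix (Fin n) (Fin n) ℝ) (F : En n → En n) (T : ℝ)
    (H : ℝ → En n → ℝ) (g : En n → ℝ) (v : ℝ → En n → ℝ) : Prop :=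
  (∀ x, v 0 x = g x) ∧
  ContinuousOn (fun q : ℝ × En n => v q.1 q.2) (Set.Icc 0 T ×ˢ Set.univ) ∧
  (∃ M, ∀ t ∈ Set.Icc (0 : ℝ) T, ∀ x, |v t x| ≤ M) ∧
  (∀ ε > (0 : ℝ), ∃ δ > (0 : ℝ), ∀ y : En n, ‖y‖ < δ →
    ∀ t ∈ Set.Icc (0 : ℝ) T, ∀ x, |v t (x + y) - v t x| < ε) ∧
  ∀ φ : En n → ℝ, IsTest n φ →
    (∀ t ∈ Set.Icc (0 : ℝ) T,
      HasDerivWithinAt (fun s => ∫ x, v s x * φ x)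
        ((∫ x, v t x * Astar n A Q F φ x) + ∫ x, H t x * φ x) (Set.Icc 0 T) t) ∧
    ContinuousOn (fun t => (∫ x, v t x * Astar n A Q F φ x) + ∫ x, H t x * φ x)
      (Set.Icc 0 T)

/-- Block hypothesis on `Q`: symmetric, vanishing outside the upper-left `p̃ × p̃` block,
with positive definite upper-left block. -/
def QBlock (n p : ℕ) (Q : Matrix (Fin n) (Fin n) ℝ) : Prop :=
  Q.IsSymm ∧ (∀ i j : Fin n, (p ≤ (i : ℕ) ∨ p ≤ (j : ℕ)) → Q i j = 0) ∧
  ∀ ξ : Fin n → ℝ, (∀ i : Fin n, p ≤ (i : ℕ) → ξ i = 0) → ξ ≠ 0 →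
    0 < ∑ i, ∑ j, Q i j * ξ i * ξ j

/-- Structure and regularity hypothesis on `F`: only the first `p̃` components are non-zero,
`F` is Lipschitz continuous, and `F` has bounded derivatives up to third order. -/
def FHyp (n p : ℕ) (F : En n → En n) : Prop :=
  (∀ x, ∀ i : Fin n, p ≤ (i : ℕ) → F x i = 0) ∧
  (∃ L : NNReal, LipschitzWith L F) ∧ ContDiff ℝ 3 F ∧
  ∃ M, ∀ x, ‖fderiv ℝ F x‖ ≤ M ∧ ‖iteratedFDeriv ℝ 2 F x‖ ≤ M ∧ ‖iteratedFDeriv ℝ 3 F x‖ ≤ M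

/-- The `d`-Hölder bound: `|f(x) − f(y)| ≤ M |||x − y|||^γ` for all `x, y`. -/
def HolderDBound (n : ℕ) (A : Matrix (Fin n) (Fin n) ℝ) (p k : ℕ) (γ : ℝ) (f : En n → ℝ)
    (M : ℝ) : Prop :=
  ∀ x y : En n, x ≠ y → |f x - f y| ≤ M * qnorm n A p k (x - y) ^ γ

/-- The seminorm `[f]_{γ,d}`, as the least constant in the `d`-Hölder bound. -/
def holderDSemi (n : ℕ) (A : Matrix (Fin n) (Fin n) ℝ) (p k : ℕ) (γ : ℝ)
    (f : En n → ℝ) : ℝ :=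
  sInf {M | 0 ≤ M ∧ HolderDBound n A p k γ f M}

variable {n : ℕ} {A : Matrix (Fin n) (Fin n) ℝ} {p : ℕ}

lemma kspan_mono {m m' : ℕ} (h : m ≤ m') : kalmanSpan n A p m ≤ kalmanSpan n A p m' := by
  apply Submodule.span_mono
  rintro x ⟨j, hj, i, hi, rfl⟩
  exact ⟨j, hj.trans h, i, hi, rfl⟩

lemma W_le_V (m : ℕ) : Wspace n A p m ≤ kalmanSpan n A p m := by
  cases m with
  | zero => exact le_rfl
  | succ m => exact inf_le_left

lemma W_ortho {j h : ℕ} (hjh : j ≠ h) : Wspace n A p j ≤ (Wspace n A p h)ᗮ := by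
  wlog hlt : j < h generalizing j h
  · have h2 : h < j := by omega
    intro x hx u hu
    have hxz : inner ℝ x u = (0 : ℝ) := this (Ne.symm hjh) h2 hu x hx
    rwa [real_inner_comm] at hxz
  · obtain ⟨h', rfl⟩ : ∃ h', h = h' + 1 := ⟨h - 1, by omega⟩
    have h1 : Wspace n A p j ≤ kalmanSpan n A p h' :=
      (W_le_V j).trans (kspan_mono (by omega))
    have h2 : Wspace n A p (h' + 1) ≤ (kalmanSpan n A p h')ᗮ := inf_le_right
    intro x hx u hu
    have := (h2 hu) x (h1 hx)
    rwa [real_inner_comm] at this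

lemma W_ortho' {j h : ℕ} (hjh : j ≠ h) : Wspace n A p j ≤ (Wspace n A p h)ᗮ := W_ortho hjh

lemma decompW (m : ℕ) (x : En n) (hx : x ∈ kalmanSpan n A p m) :
    ∃ w : ℕ → En n, (∀ h, w h ∈ Wspace n A p h) ∧ x = ∑ h ∈ Finset.range (m + 1), w h := by
  induction m generalizing x with
  | zero =>
    refine ⟨fun h => if h = 0 then x else 0, fun h => ?_, by simp⟩
    by_cases hh : h = 0
    · subst hh; simpa [Wspace] using hx
    · simp [hh]
  | succ m ih =>
    have hsup : kalmanSpan n A p m ⊔ (kalmanSpan n A p m)ᗮ ⊓ kalmanSpan n A p (m + 1)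
        = kalmanSpan n A p (m + 1) :=
      Submodule.sup_orthogonal_inf_of_hasOrthogonalProjection (kspan_mono (Nat.le_succ m))
    rw [← hsup, Submodule.mem_sup] at hx
    obtain ⟨u, hu, v, hv, rfl⟩ := hx
    obtain ⟨w, hw, hsum⟩ := ih u hu
    refine ⟨Function.update w (m + 1) v, fun h => ?_, ?_⟩
    · by_cases hh : h = m + 1
      · subst hh; rw [Function.update_self]; exact ⟨hv.2, hv.1⟩
      · rw [Function.update_of_ne hh]; exact hw h
    · rw [Finset.sum_range_succ, Function.update_self, hsum]
      congr 1
      exact Finset.sum_congr rfl fun h hh => by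
        rw [Function.update_of_ne (by simp at hh; omega)]

lemma Eproj_of_decomp {k : ℕ} (w : ℕ → En n) (hw : ∀ h, w h ∈ Wspace n A p h)
    {j : ℕ} (hj : j ∈ Finset.range (k + 1)) :
    Eproj n A p j (∑ h ∈ Finset.range (k + 1), w h) = w j := by
  unfold Eproj Submodule.orthogonalProjection
  rw [map_sum]
  rw [Submodule.coe_sum]
  rw [Finset.sum_eq_single j]
  · exact congrArg Subtype.val (Submodule.orthogonalProjectionOnto_mem_subspace_eq_self ⟨w j, hw j⟩)
  · intro h _ hne
    rw [Submodule.orthogonalProjectionOnto_apply_of_mem_orthogonal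
      (W_ortho hne (hw h))]
    rfl
  · intro hj'; exact absurd hj hj'

lemma sum_Eproj {k : ℕ} (hK : kalmanSpan n A p k = ⊤) (x : En n) :
    ∑ h ∈ Finset.range (k + 1), Eproj n A p h x = x := by
  obtain ⟨w, hw, hsum⟩ := decompW k x (hK ▸ Submodule.mem_top)
  calc ∑ h ∈ Finset.range (k + 1), Eproj n A p h x
      = ∑ h ∈ Finset.range (k + 1), w h := by
        refine Finset.sum_congr rfl fun j hj => ?_
        rw [hsum, Eproj_of_decomp w hw hj]
    _ = x := hsum.symm

lemma Eproj_mem_W {m : ℕ} {v : En n} (hv : v ∈ Wspace n A p m) {h : ℕ} :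
    Eproj n A p h v = if h = m then v else 0 := by
  unfold Eproj Submodule.orthogonalProjection
  by_cases hh : h = m
  · subst hh; simpa using congrArg Subtype.val (Submodule.orthogonalProjectionOnto_mem_subspace_eq_self ⟨v, hv⟩)
  · rw [Submodule.orthogonalProjectionOnto_apply_of_mem_orthogonal
      (W_ortho (Ne.symm hh) hv)]
    simp [hh]

lemma qnorm_of_mem {k m : ℕ} (hm : m ≤ k) {v : En n} (hv : v ∈ Wspace n A p m) :
    qnorm n A p k v = ‖v‖ ^ ((1 : ℝ) / (2 * (m : ℝ) + 1)) := by
  unfold qnorm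
  rw [Finset.sum_eq_single m]
  · rw [Eproj_mem_W hv]; simp
  · intro h _ hne
    rw [Eproj_mem_W hv, if_neg hne, norm_zero, Real.zero_rpow]
    positivity
  · intro hm'; exact absurd (Finset.mem_range.2 (by omega)) hm'

lemma qnorm_nonneg (k : ℕ) (x : En n) : 0 ≤ qnorm n A p k x :=
  Finset.sum_nonneg fun h _ => Real.rpow_nonneg (norm_nonneg _) _

lemma sexp_lt_one {γ : ℝ} (hγ0 : 0 < γ) (hγ1 : γ < 1) (m : ℕ) :
    γ / (2 * (m : ℝ) + 1) < 1 := by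
  have h1 : (1 : ℝ) ≤ 2 * (m : ℝ) + 1 := by
    have : (0:ℝ) ≤ (m:ℝ) := Nat.cast_nonneg m
    linarith
  calc γ / (2 * (m : ℝ) + 1) ≤ γ / 1 := by
        apply div_le_div_of_nonneg_left hγ0.le (by norm_num) h1
    _ < 1 := by simpa using hγ1

lemma bound_of_memCd {k : ℕ} {γ : ℝ} (hγ0 : 0 < γ) (hγ1 : γ < 1) {f : En n → ℝ} {M : ℝ}
    (h : MemCd n A p k γ f M) : ∀ x, |f x| ≤ M := by
  intro x
  have h0 := h x 0 (Nat.zero_le k)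
  have hs : γ / (2 * ((0 : ℕ) : ℝ) + 1) = γ := by norm_num
  rw [hs, MemHolderB, if_pos hγ1] at h0
  have := h0.1 0
  simpa [restrictW] using this

lemma memCd_nonneg {k : ℕ} {γ : ℝ} (hγ0 : 0 < γ) (hγ1 : γ < 1) {f : En n → ℝ} {M : ℝ}
    (h : MemCd n A p k γ f M) : 0 ≤ M :=
  le_trans (abs_nonneg _) (bound_of_memCd hγ0 hγ1 h 0)

lemma holder_of_memCd {k : ℕ} (hK : kalmanSpan n A p k = ⊤) {γ : ℝ} (hγ0 : 0 < γ)
    (hγ1 : γ < 1) {f : En n → ℝ} {M : ℝ} (hM : 0 ≤ M) (h : MemCd n A p k γ f M) :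
    HolderDBound n A p k γ f (((k : ℝ) + 1) * M) := by
  intro x y hxy
  set v := x - y with hv
  set g : ℕ → ℝ := fun j => f (y + ∑ h ∈ Finset.range j, Eproj n A p h v) with hg
  have hgx : g (k + 1) = f x := by
    rw [hg]; simp only []
    rw [sum_Eproj hK v, hv]
    congr 1; abel
  have hgy : g 0 = f y := by simp [hg]
  have tele : f x - f y = ∑ j ∈ Finset.range (k + 1), (g (j + 1) - g j) := by
    rw [Finset.sum_range_sub g, hgx, hgy]
  have step : ∀ j ∈ Finset.range (k + 1),
      |g (j + 1) - g j| ≤ M * qnorm n A p k v ^ γ := by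
    intro j hj
    have hjk : j ≤ k := by simpa using Nat.lt_succ_iff.mp (Finset.mem_range.1 hj)
    set z := y + ∑ h ∈ Finset.range j, Eproj n A p h v with hz
    have hmem : Eproj n A p j v ∈ Wspace n A p j := (Submodule.orthogonalProjection (Wspace n A p j) v).2
    have hMH := h z j hjk
    rw [MemHolderB, if_pos (sexp_lt_one hγ0 hγ1 j)] at hMH
    have hb := hMH.2 ⟨Eproj n A p j v, hmem⟩ 0
    have h1 : g (j + 1) - g j = restrictW n A p j f z ⟨Eproj n A p j v, hmem⟩
        - restrictW n A p j f z 0 := by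
      simp only [restrictW, hg, hz, Finset.sum_range_succ]
      norm_num
      congr 1
      abel
    rw [h1]
    refine le_trans hb ?_
    have hnorm : ‖(⟨Eproj n A p j v, hmem⟩ - 0 : Wspace n A p j)‖ = ‖Eproj n A p j v‖ := by
      simp
    rw [hnorm]
    have hkey : ‖Eproj n A p j v‖ ^ (γ / (2 * (j : ℝ) + 1))
        ≤ qnorm n A p k v ^ γ := by
      have e1 : γ / (2 * (j : ℝ) + 1) = (1 / (2 * (j : ℝ) + 1)) * γ := by ring
      rw [e1, Real.rpow_mul (norm_nonneg _)]
      apply Real.rpow_le_rpow (Real.rpow_nonneg (norm_nonneg _) _) _ hγ0.le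
      apply Finset.single_le_sum (fun h _ => Real.rpow_nonneg (norm_nonneg _) _) hj
    exact mul_le_mul_of_nonneg_left hkey hM
  calc |f x - f y| ≤ ∑ j ∈ Finset.range (k + 1), |g (j + 1) - g j| := by
        rw [tele]; exact Finset.abs_sum_le_sum_abs _ _
    _ ≤ ∑ j ∈ Finset.range (k + 1), M * qnorm n A p k v ^ γ :=
        Finset.sum_le_sum step
    _ = ((k : ℝ) + 1) * M * qnorm n A p k v ^ γ := by
        rw [Finset.sum_const, Finset.card_range]
        push_cast; ring

lemma memCd_of_holder {k : ℕ} {γ : ℝ} (hγ0 : 0 < γ) (hγ1 : γ < 1) {f : En n → ℝ}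
    {M₁ M₂ : ℝ} (hM₂ : 0 ≤ M₂) (h1 : ∀ x, |f x| ≤ M₁) (h2 : HolderDBound n A p k γ f M₂) :
    MemCd n A p k γ f (M₁ + M₂) := by
  have hM₁ : 0 ≤ M₁ := le_trans (abs_nonneg _) (h1 0)
  intro z m hm
  rw [MemHolderB, if_pos (sexp_lt_one hγ0 hγ1 m)]
  constructor
  · intro w; exact le_trans (h1 _) (by linarith)
  · intro w w'
    have hsne : γ / (2 * (m : ℝ) + 1) ≠ 0 := by
      have : (0:ℝ) < 2 * (m : ℝ) + 1 := by positivity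
      positivity
    by_cases hww : w = w'
    · subst hww
      simp only [sub_self, abs_zero, norm_zero]
      rw [Real.zero_rpow hsne, mul_zero]
    · have hne : z + (w : En n) ≠ z + (w' : En n) := by
        intro hcon
        exact hww (Subtype.ext (by simpa using hcon))
      have hb := h2 (z + (w : En n)) (z + (w' : En n)) hne
      have hdiff : (z + (w : En n)) - (z + (w' : En n)) = ((w - w' : Wspace n A p m) : En n) := by
        push_cast; abel
      rw [hdiff] at hb
      have hq := qnorm_of_mem (A := A) hm (Submodule.coe_mem (w - w'))
      have hnorm : ‖((w - w' : Wspace n A p m) : En n)‖ = ‖w - w'‖ := rfl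
      rw [hq, hnorm] at hb
      have e1 : (‖w - w'‖ ^ ((1:ℝ) / (2 * (m : ℝ) + 1))) ^ γ
          = ‖w - w'‖ ^ (γ / (2 * (m : ℝ) + 1)) := by
        rw [← Real.rpow_mul (norm_nonneg _)]
        ring_nf
      rw [e1] at hb
      refine le_trans hb (mul_le_mul_of_nonneg_right (by linarith)
        (Real.rpow_nonneg (norm_nonneg _) _))

/-- For `γ ∈ (0,1)` and `f ∈ C_b(ℝⁿ)`: `f ∈ C^γ_d(ℝⁿ)` iff `f` is
`γ`-Hölder continuous with respect to the metric `d`, i.e. `[f]_{γ,d} < ∞`; moreover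
`‖f‖₀ + [f]_{γ,d}` is equivalent on `C^γ_d(ℝⁿ)` to the norm `‖f‖_{γ,d}`. -/
theorem stmt1 (n p k : ℕ) (hn : 1 ≤ n) (hp : 1 ≤ p) (hpn : p ≤ n)
    (A : Matrix (Fin n) (Fin n) ℝ) (hK : KalmanSmallest n A p k)
    (γ : ℝ) (hγ0 : 0 < γ) (hγ1 : γ < 1) :
    (∀ f : En n → ℝ, IsCb n f →
      (InCd n A p k γ f ↔ ∃ M, 0 ≤ M ∧ HolderDBound n A p k γ f M)) ∧
    ∃ c₁ c₂ : ℝ, 0 < c₁ ∧ 0 < c₂ ∧ ∀ f : En n → ℝ, InCd n A p k γ f →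
      c₁ * CdNorm n A p k γ f ≤ supNorm n f + holderDSemi n A p k γ f ∧
      supNorm n f + holderDSemi n A p k γ f ≤ c₂ * CdNorm n A p k γ f := by
  constructor
  · intro f hf
    constructor
    · rintro ⟨_, M, hM⟩
      have hM0 := memCd_nonneg hγ0 hγ1 hM
      refine ⟨((k : ℝ) + 1) * M, by positivity, holder_of_memCd hK.1 hγ0 hγ1 hM0 hM⟩
    · rintro ⟨M, hM0, hb⟩
      obtain ⟨M₁, h₁⟩ := hf.2
      exact ⟨hf, M₁ + M, memCd_of_holder hγ0 hγ1 hM0 h₁ hb⟩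
  · refine ⟨1, (k : ℝ) + 2, one_pos, by positivity, fun f hf => ?_⟩
    obtain ⟨hcb, M0, hM0mem⟩ := hf
    have hM00 : 0 ≤ M0 := memCd_nonneg hγ0 hγ1 hM0mem
    set Ssup := {M | 0 ≤ M ∧ ∀ x, |f x| ≤ M} with hSsup
    set Shol := {M | 0 ≤ M ∧ HolderDBound n A p k γ f M} with hShol
    set SCd := {M | 0 ≤ M ∧ MemCd n A p k γ f M} with hSCd
    have bddSup : BddBelow Ssup := ⟨0, fun M hM => hM.1⟩
    have bddHol : BddBelow Shol := ⟨0, fun M hM => hM.1⟩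
    have bddCd : BddBelow SCd := ⟨0, fun M hM => hM.1⟩
    have neSup : Ssup.Nonempty := ⟨M0, hM00, bound_of_memCd hγ0 hγ1 hM0mem⟩
    have neHol : Shol.Nonempty :=
      ⟨((k : ℝ) + 1) * M0, by positivity, holder_of_memCd hK.1 hγ0 hγ1 hM00 hM0mem⟩
    have neCd : SCd.Nonempty := ⟨M0, hM00, hM0mem⟩
    have hsupNorm : supNorm n f = sInf Ssup := rfl
    have hhol : holderDSemi n A p k γ f = sInf Shol := rfl
    have hCd : CdNorm n A p k γ f = sInf SCd := rfl
    constructor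
    · rw [one_mul, hsupNorm, hhol, hCd]
      have key1 : ∀ M₁ ∈ Ssup, ∀ M₂ ∈ Shol, sInf SCd ≤ M₁ + M₂ := by
        intro M₁ h₁ M₂ h₂
        exact csInf_le bddCd ⟨add_nonneg h₁.1 h₂.1,
          memCd_of_holder hγ0 hγ1 h₂.1 h₁.2 h₂.2⟩
      have h1 : ∀ M₂ ∈ Shol, sInf SCd - M₂ ≤ sInf Ssup := fun M₂ h₂ =>
        le_csInf neSup fun M₁ h₁ => by linarith [key1 M₁ h₁ M₂ h₂]
      have h2 : sInf SCd - sInf Ssup ≤ sInf Shol :=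
        le_csInf neHol fun M₂ h₂ => by linarith [h1 M₂ h₂]
      linarith
    · rw [hsupNorm, hhol, hCd]
      have key2 : ∀ M ∈ SCd, sInf Ssup + sInf Shol ≤ ((k : ℝ) + 2) * M := by
        intro M hM
        have e1 : sInf Ssup ≤ M :=
          csInf_le bddSup ⟨hM.1, bound_of_memCd hγ0 hγ1 hM.2⟩
        have e2 : sInf Shol ≤ ((k : ℝ) + 1) * M :=
          csInf_le bddHol ⟨by have h0 := hM.1; positivity, holder_of_memCd hK.1 hγ0 hγ1 hM.1 hM.2⟩
        have : ((k : ℝ) + 2) * M = M + ((k : ℝ) + 1) * M := by ring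
        linarith
      have hpos : (0 : ℝ) < (k : ℝ) + 2 := by positivity
      have hdiv : (sInf Ssup + sInf Shol) / ((k : ℝ) + 2) ≤ sInf SCd :=
        le_csInf neCd fun M hM => (div_le_iff₀ hpos).2 (by
          have := key2 M hM; linarith [mul_comm M ((k : ℝ) + 2)])
      calc sInf Ssup + sInf Shol
          = ((sInf Ssup + sInf Shol) / ((k : ℝ) + 2)) * ((k : ℝ) + 2) := by
            field_simp
        _ ≤ sInf SCd * ((k : ℝ) + 2) := by
            exact mul_le_mul_of_nonneg_right hdiv hpos.le
        _ = ((k : ℝ) + 2) * sInf SCd := mul_comm _ _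

end
end

section
/- Let E₀,…,E_k be orthogonal projections of ℝⁿ onto mutually orthogonal subspaces with ℝⁿ = ⊕_{i=0}^k E_i(ℝⁿ), let A be an n×n real matrix, and let c > 0 be a constant such that ‖E_i e^{tA} E_h‖ ≤ c t^{i−h} for 0 ≤ h ≤ i ≤ k and ‖E_i e^{tA} E_h‖ ≤ c t for 0 ≤ i < h ≤ k, for all t ∈ [0,1]. Then there exists c₁ > 0, depending only on c, such that for every h ∈ {0,…,k}, every v ∈ E_h(ℝⁿ) with 0 < |v| ≤ 1, and every t with 0 ≤ t ≤ |v|^{2/(2h+1)}, one has Σ_{i=0}^k |E_i e^{tA} v|^{1/(2i+1)} ≤ c₁ (k+1) |v|^{1/(2h+1)}. -/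
open scoped RealInnerProductSpace

noncomputable section

/-- `e^{tA}` as a continuous linear operator on `ℝⁿ`, for a matrix `A`. -/
def expMat (n : ℕ) (A : Matrix (Fin n) (Fin n) ℝ) (t : ℝ) : En n →L[ℝ] En n :=
  NormedSpace.exp (t • Matrix.toEuclideanCLM (𝕜 := ℝ) A)

/-- Let `E₀,…,E_k` be the orthogonal projections of an orthogonal
decomposition `ℝⁿ = ⊕ E_i(ℝⁿ)` and suppose `‖E_i e^{tA} E_h‖ ≤ c t^{i−h}` for `h ≤ i` and
`‖E_i e^{tA} E_h‖ ≤ c t` for `i < h`, `t ∈ [0,1]`. Then there exists `c₁ > 0`, depending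
only on `c`, such that for `v ∈ E_h(ℝⁿ)` with `0 < |v| ≤ 1` and `0 ≤ t ≤ |v|^{2/(2h+1)}`,
`Σ_i |E_i e^{tA} v|^{1/(2i+1)} ≤ c₁ (k+1) |v|^{1/(2h+1)}`. -/
theorem stmt14 (n k : ℕ) (E : Fin (k + 1) → (En n →L[ℝ] En n))
    (hsa : ∀ i, ∀ x y : En n, ⟪E i x, y⟫ = ⟪x, E i y⟫)
    (hidem : ∀ i, (E i).comp (E i) = E i)
    (horth : ∀ i j, i ≠ j → (E i).comp (E j) = 0)
    (hsum : (∑ i, E i) = ContinuousLinearMap.id ℝ (En n))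
    (A : Matrix (Fin n) (Fin n) ℝ) (c : ℝ) (hc : 0 < c)
    (h1 : ∀ t ∈ Set.Icc (0 : ℝ) 1, ∀ h i : Fin (k + 1), (h : ℕ) ≤ (i : ℕ) →
      ‖(E i).comp ((expMat n A t).comp (E h))‖ ≤ c * t ^ ((i : ℕ) - (h : ℕ)))
    (h2 : ∀ t ∈ Set.Icc (0 : ℝ) 1, ∀ h i : Fin (k + 1), (i : ℕ) < (h : ℕ) →
      ‖(E i).comp ((expMat n A t).comp (E h))‖ ≤ c * t) :
    ∃ c₁ : ℝ, 0 < c₁ ∧ ∀ h : Fin (k + 1), ∀ v : En n, E h v = v →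
      0 < ‖v‖ → ‖v‖ ≤ 1 → ∀ t : ℝ, 0 ≤ t → t ≤ ‖v‖ ^ ((2 : ℝ) / (2 * (h : ℕ) + 1)) →
        (∑ i : Fin (k + 1), ‖E i (expMat n A t v)‖ ^ ((1 : ℝ) / (2 * (i : ℕ) + 1))) ≤
          c₁ * (k + 1) * ‖v‖ ^ ((1 : ℝ) / (2 * (h : ℕ) + 1)) := by
  refine ⟨max c 1, lt_max_of_lt_right one_pos, ?_⟩
  intro h v hv hv0 hv1 t ht0 ht1
  have ht1' : t ≤ 1 := ht1.trans (Real.rpow_le_one hv0.le hv1 (by positivity))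
  have htI : t ∈ Set.Icc (0:ℝ) 1 := ⟨ht0, ht1'⟩
  have key : ∀ i : Fin (k+1),
      ‖E i (expMat n A t v)‖ ≤ c * ‖v‖ ^ ((2*(i:ℕ)+1 : ℝ)/(2*(h:ℕ)+1)) := by
    intro i
    have heq : E i (expMat n A t v) = ((E i).comp ((expMat n A t).comp (E h))) v := by
      simp [ContinuousLinearMap.comp_apply, hv]
    rw [heq]
    have hop := ((E i).comp ((expMat n A t).comp (E h))).le_opNorm v
    rcases le_or_gt (h:ℕ) (i:ℕ) with hhi | hih
    · have hb := h1 t htI h i hhi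
      have hpow : t ^ ((i:ℕ) - (h:ℕ)) ≤ ‖v‖ ^ ((2*(((i:ℕ)-(h:ℕ) : ℕ)) : ℝ)/(2*(h:ℕ)+1)) := by
        calc t ^ ((i:ℕ) - (h:ℕ)) ≤ (‖v‖ ^ ((2:ℝ)/(2*(h:ℕ)+1))) ^ ((i:ℕ)-(h:ℕ)) :=
              pow_le_pow_left₀ ht0 ht1 _
          _ = ‖v‖ ^ ((2*(((i:ℕ)-(h:ℕ) : ℕ)) : ℝ)/(2*(h:ℕ)+1)) := by
              rw [← Real.rpow_natCast (‖v‖ ^ ((2:ℝ)/(2*(h:ℕ)+1))), ← Real.rpow_mul hv0.le]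
              ring_nf
      calc ‖((E i).comp ((expMat n A t).comp (E h))) v‖
          ≤ (c * t ^ ((i:ℕ)-(h:ℕ))) * ‖v‖ :=
            hop.trans (mul_le_mul_of_nonneg_right hb (norm_nonneg v))
        _ ≤ (c * ‖v‖ ^ ((2*(((i:ℕ)-(h:ℕ) : ℕ)) : ℝ)/(2*(h:ℕ)+1))) * ‖v‖ := by
            exact mul_le_mul_of_nonneg_right
              (mul_le_mul_of_nonneg_left hpow hc.le) (norm_nonneg v)
        _ = c * ‖v‖ ^ ((2*(i:ℕ)+1 : ℝ)/(2*(h:ℕ)+1)) := by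
            rw [mul_assoc, ← Real.rpow_add_one (ne_of_gt hv0)]
            congr 1
            have hcast : ((((i:ℕ)-(h:ℕ) : ℕ)) : ℝ) = (i:ℕ) - (h:ℕ) := Nat.cast_sub hhi
            rw [hcast]
            have hd : (2*(h:ℕ)+1 : ℝ) ≠ 0 := by positivity
            field_simp
            ring
    · have hb := h2 t htI h i hih
      have hd : (0:ℝ) < 2*(h:ℕ)+1 := by positivity
      have hpow : t * ‖v‖ ≤ ‖v‖ ^ ((2*(i:ℕ)+1 : ℝ)/(2*(h:ℕ)+1)) := by
        calc t * ‖v‖ ≤ ‖v‖ ^ ((2:ℝ)/(2*(h:ℕ)+1)) * ‖v‖ :=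
              mul_le_mul_of_nonneg_right ht1 (norm_nonneg v)
          _ = ‖v‖ ^ ((2:ℝ)/(2*(h:ℕ)+1) + 1) := (Real.rpow_add_one (ne_of_gt hv0) _).symm
          _ ≤ ‖v‖ ^ ((2*(i:ℕ)+1 : ℝ)/(2*(h:ℕ)+1)) := by
              apply Real.rpow_le_rpow_of_exponent_ge hv0 hv1
              rw [div_add' _ _ _ (ne_of_gt hd)]
              apply (div_le_div_iff_of_pos_right hd).mpr
              have hch : ((i:ℕ):ℝ) + 1 ≤ ((h:ℕ):ℝ) := by exact_mod_cast hih
              linarith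
      calc ‖((E i).comp ((expMat n A t).comp (E h))) v‖
          ≤ (c * t) * ‖v‖ :=
            hop.trans (mul_le_mul_of_nonneg_right hb (norm_nonneg v))
        _ = c * (t * ‖v‖) := by ring
        _ ≤ c * ‖v‖ ^ ((2*(i:ℕ)+1 : ℝ)/(2*(h:ℕ)+1)) :=
            mul_le_mul_of_nonneg_left hpow hc.le
  have term : ∀ i : Fin (k+1),
      ‖E i (expMat n A t v)‖ ^ ((1:ℝ)/(2*(i:ℕ)+1)) ≤
        max c 1 * ‖v‖ ^ ((1:ℝ)/(2*(h:ℕ)+1)) := by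
    intro i
    have hq : (0:ℝ) ≤ (1:ℝ)/(2*(i:ℕ)+1) := by positivity
    have h1le : ((1:ℝ)/(2*(i:ℕ)+1)) ≤ 1 := by
      rw [div_le_one (by positivity)]
      have : (0:ℝ) ≤ ((i:ℕ):ℝ) := Nat.cast_nonneg _
      linarith
    calc ‖E i (expMat n A t v)‖ ^ ((1:ℝ)/(2*(i:ℕ)+1))
        ≤ (c * ‖v‖ ^ ((2*(i:ℕ)+1 : ℝ)/(2*(h:ℕ)+1))) ^ ((1:ℝ)/(2*(i:ℕ)+1)) :=
          Real.rpow_le_rpow (norm_nonneg _) (key i) hq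
      _ = c ^ ((1:ℝ)/(2*(i:ℕ)+1)) *
            (‖v‖ ^ ((2*(i:ℕ)+1 : ℝ)/(2*(h:ℕ)+1))) ^ ((1:ℝ)/(2*(i:ℕ)+1)) :=
          Real.mul_rpow hc.le (Real.rpow_nonneg (norm_nonneg v) _)
      _ = c ^ ((1:ℝ)/(2*(i:ℕ)+1)) * ‖v‖ ^ ((1:ℝ)/(2*(h:ℕ)+1)) := by
          have hne : (2*(i:ℕ)+1 : ℝ) ≠ 0 := by positivity
          have hne' : (2*(h:ℕ)+1 : ℝ) ≠ 0 := by positivity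
          have hmul : ((2*(i:ℕ)+1 : ℝ)/(2*(h:ℕ)+1)) * ((1:ℝ)/(2*(i:ℕ)+1)) =
              (1:ℝ)/(2*(h:ℕ)+1) := by field_simp
          rw [← Real.rpow_mul (norm_nonneg v), hmul]
      _ ≤ max c 1 * ‖v‖ ^ ((1:ℝ)/(2*(h:ℕ)+1)) := by
          apply mul_le_mul_of_nonneg_right ?_ (Real.rpow_nonneg (norm_nonneg v) _)
          rcases le_or_gt c 1 with hc1 | hc1
          · exact (Real.rpow_le_one hc.le hc1 hq).trans (le_max_right c 1)
          · calc c ^ ((1:ℝ)/(2*(i:ℕ)+1)) ≤ c ^ (1:ℝ) :=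
                  Real.rpow_le_rpow_of_exponent_le hc1.le h1le
              _ = c := Real.rpow_one c
              _ ≤ max c 1 := le_max_left c 1
  calc (∑ i : Fin (k + 1), ‖E i (expMat n A t v)‖ ^ ((1:ℝ)/(2*(i:ℕ)+1)))
      ≤ ∑ _i : Fin (k + 1), max c 1 * ‖v‖ ^ ((1:ℝ)/(2*(h:ℕ)+1)) :=
        Finset.sum_le_sum fun i _ => term i
    _ = (k+1) * (max c 1 * ‖v‖ ^ ((1:ℝ)/(2*(h:ℕ)+1))) := by
        rw [Finset.sum_const, Finset.card_univ, Fintype.card_fin, nsmul_eq_mul]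
        push_cast
        ring
    _ = max c 1 * (k+1) * ‖v‖ ^ ((1:ℝ)/(2*(h:ℕ)+1)) := by ring

end
end

section
/- Let θ ∈ (0,1), λ > 0, K > 0, h a nonnegative integer, and E a linear subspace of ℝⁿ. Let w : (0,∞) × ℝⁿ → ℝ be such that t ↦ w(t,x) is measurable for every x, sup_{x∈ℝⁿ} |w(t,x)| ≤ K ( t^{θ/2 − 1} + 1 ) for all t > 0, and |w(t,x+v) − w(t,x)| ≤ K ( t^{θ/2 − 3/2 − h} + 1 ) |v| for all t > 0, x ∈ ℝⁿ and v ∈ E. Then the integral U(x) = ∫₀^∞ e^{−λt} w(t,x) dt converges absolutely for every x ∈ ℝⁿ, and there exists a constant C depending only on θ, λ and h such that |U(x+v) − U(x)| ≤ C K |v|^{θ/(2h+1)} for all x ∈ ℝⁿ and all v ∈ E with 0 < |v| ≤ 1. -/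
open MeasureTheory

noncomputable section

lemma myexp_le_one {a : ℝ} (ha : a ≤ 0) : Real.exp a ≤ 1 := by
  rw [← Real.exp_zero]; exact Real.exp_le_exp.mpr ha

lemma aux_exp_rpow_integrable {b s : ℝ} (hb : 0 < b) (hs1 : -1 < s) (hs0 : s < 0) :
    IntegrableOn (fun t => Real.exp (-(b * t)) * (t ^ s + 1)) (Set.Ioi (0 : ℝ)) := by
  have hmeas : Measurable (fun t : ℝ => Real.exp (-(b * t)) * (t ^ s + 1)) := by
    fun_prop
  rw [← Set.Ioc_union_Ioi_eq_Ioi (zero_le_one (α := ℝ))]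
  apply MeasureTheory.IntegrableOn.union
  · have h1 : IntegrableOn (fun t : ℝ => t ^ s + 1) (Set.Ioc (0 : ℝ) 1) := by
      apply Integrable.add
      · have := intervalIntegral.intervalIntegrable_rpow' (a := 0) (b := 1) hs1
        rwa [intervalIntegrable_iff_integrableOn_Ioc_of_le zero_le_one] at this
      · exact integrableOn_const measure_Ioc_lt_top.ne enorm_ne_top
    refine h1.mono' hmeas.aestronglyMeasurable.restrict ?_
    filter_upwards [ae_restrict_mem measurableSet_Ioc] with t ht
    have ht0 : 0 < t := ht.1
    have h1' : (0 : ℝ) ≤ t ^ s + 1 := by positivity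
    rw [Real.norm_eq_abs, abs_mul, abs_of_pos (Real.exp_pos _), abs_of_nonneg h1']
    have hexp1 : Real.exp (-(b * t)) ≤ 1 := myexp_le_one (by nlinarith)
    nlinarith [Real.exp_pos (-(b * t))]
  · have h2 : IntegrableOn (fun t : ℝ => 2 * Real.exp (-(b * t))) (Set.Ioi (1 : ℝ)) := by
      have := (exp_neg_integrableOn_Ioi 1 hb).const_mul 2
      simpa [neg_mul, IntegrableOn] using this
    refine h2.mono' hmeas.aestronglyMeasurable.restrict ?_
    filter_upwards [ae_restrict_mem measurableSet_Ioi] with t ht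
    have ht1 : (1 : ℝ) ≤ t := le_of_lt ht
    have hts : t ^ s ≤ 1 := Real.rpow_le_one_of_one_le_of_nonpos ht1 hs0.le
    have hts0 : (0 : ℝ) ≤ t ^ s := Real.rpow_nonneg (by linarith) s
    rw [Real.norm_eq_abs, abs_mul, abs_of_pos (Real.exp_pos _), abs_of_nonneg (by linarith)]
    nlinarith [Real.exp_pos (-(b * t))]

set_option maxHeartbeats 1000000

/-- Abstract integral estimate behind the elliptic Schauder estimates:
if `|w(t,·)| ≤ K(t^{θ/2−1} + 1)` and `|w(t,x+v) − w(t,x)| ≤ K(t^{θ/2−3/2−h} + 1)|v|` for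
`v ∈ E`, then `U(x) = ∫₀^∞ e^{−λt} w(t,x) dt` converges absolutely and
`|U(x+v) − U(x)| ≤ C K |v|^{θ/(2h+1)}` for `v ∈ E` with `0 < |v| ≤ 1`, where `C` depends
only on `θ`, `λ` and `h`. -/
theorem stmt18 (θ lam : ℝ) (hθ0 : 0 < θ) (hθ1 : θ < 1) (hlam : 0 < lam) (h : ℕ) :
    ∃ C : ℝ, 0 < C ∧
      ∀ (n : ℕ) (E : Submodule ℝ (En n)) (K : ℝ), 0 < K →
      ∀ w : ℝ → En n → ℝ,
      (∀ x, AEMeasurable (fun t => w t x) (volume.restrict (Set.Ioi (0 : ℝ)))) →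
      (∀ t : ℝ, 0 < t → ∀ x, |w t x| ≤ K * (t ^ (θ / 2 - 1) + 1)) →
      (∀ t : ℝ, 0 < t → ∀ x, ∀ v ∈ E,
        |w t (x + v) - w t x| ≤ K * (t ^ (θ / 2 - 3 / 2 - (h : ℝ)) + 1) * ‖v‖) →
      (∀ x, IntegrableOn (fun t => Real.exp (-(lam * t)) * w t x) (Set.Ioi 0)) ∧
      ∀ x : En n, ∀ v ∈ E, 0 < ‖v‖ → ‖v‖ ≤ 1 →
        |(∫ t in Set.Ioi (0 : ℝ), Real.exp (-(lam * t)) * w t (x + v)) -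
            ∫ t in Set.Ioi (0 : ℝ), Real.exp (-(lam * t)) * w t x| ≤
          C * K * ‖v‖ ^ (θ / (2 * (h : ℝ) + 1)) := by
  have hh0 : (0 : ℝ) ≤ h := Nat.cast_nonneg h
  have h2h1 : (0 : ℝ) < 2 * (h : ℝ) + 1 := by linarith
  have hden : (0 : ℝ) < 2 * (h : ℝ) + 1 - θ := by linarith
  refine ⟨2 * (2 / θ + 1) + 2 / (2 * (h : ℝ) + 1 - θ) + 1 / lam, ?_, ?_⟩
  · have h1 : (0:ℝ) < 2 * (2 / θ + 1) := by positivity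
    have h2 : (0:ℝ) < 2 / (2 * (h : ℝ) + 1 - θ) := by positivity
    have h3 : (0:ℝ) < 1 / lam := by positivity
    linarith
  intro n E K hK w hmeas hbound hlip
  have hs1 : -1 < θ / 2 - 1 := by linarith
  have hs0 : θ / 2 - 1 < 0 := by linarith
  have hdom := aux_exp_rpow_integrable hlam hs1 hs0
  have key : ∀ x, IntegrableOn (fun t => Real.exp (-(lam * t)) * w t x) (Set.Ioi 0) := by
    intro x
    refine (hdom.const_mul K).mono' ?_ ?_
    · exact (Real.measurable_exp.comp
        ((measurable_const.mul measurable_id).neg)).aestronglyMeasurable.mul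
        (hmeas x).aestronglyMeasurable
    · filter_upwards [ae_restrict_mem measurableSet_Ioi] with t ht
      have hb := hbound t ht x
      have hexp0 := Real.exp_pos (-(lam * t))
      rw [Real.norm_eq_abs, abs_mul, abs_of_pos hexp0]
      calc Real.exp (-(lam * t)) * |w t x|
          ≤ Real.exp (-(lam * t)) * (K * (t ^ (θ / 2 - 1) + 1)) :=
            mul_le_mul_of_nonneg_left hb hexp0.le
        _ = K * (Real.exp (-(lam * t)) * (t ^ (θ / 2 - 1) + 1)) := by ring
  refine ⟨key, ?_⟩
  intro x v hvE hv0 hv1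
  set V := ‖v‖ ^ (θ / (2 * (h : ℝ) + 1)) with hVdef
  have hV0 : 0 < V := Real.rpow_pos_of_pos hv0 _
  set T := ‖v‖ ^ (2 / (2 * (h : ℝ) + 1)) with hTdef
  have hT0 : 0 < T := Real.rpow_pos_of_pos hv0 _
  have hT1 : T ≤ 1 := Real.rpow_le_one (norm_nonneg v) hv1 (by positivity)
  set p := θ / 2 - 3 / 2 - (h : ℝ) with hpdef
  have hp : p < -1 := by rw [hpdef]; linarith
  -- key rpow identities
  have hA : T ^ (θ / 2) = V := by
    rw [hTdef, ← Real.rpow_mul (norm_nonneg v), hVdef]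
    congr 1
    field_simp
  have hB : T ≤ V := by
    rw [← hA]
    calc T = T ^ (1:ℝ) := (Real.rpow_one T).symm
      _ ≤ T ^ (θ / 2) := Real.rpow_le_rpow_of_exponent_ge hT0 hT1 (by linarith)
  have hC : ‖v‖ * T ^ (p + 1) = V := by
    rw [hTdef, ← Real.rpow_mul (norm_nonneg v)]
    nth_rewrite 1 [← Real.rpow_one ‖v‖]
    rw [← Real.rpow_add hv0, hVdef]
    congr 1
    rw [hpdef]
    field_simp
    ring
  have hD : ‖v‖ ≤ V := by
    calc ‖v‖ = ‖v‖ ^ (1:ℝ) := (Real.rpow_one _).symm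
      _ ≤ V := Real.rpow_le_rpow_of_exponent_ge hv0 hv1
          (by rw [div_le_one h2h1]; linarith)
  -- difference integrand
  have hfd : IntegrableOn (fun t => Real.exp (-(lam * t)) * (w t (x + v) - w t x))
      (Set.Ioi (0:ℝ)) := by
    have := (key (x + v)).sub (key x)
    refine this.congr_fun (fun t _ => ?_) measurableSet_Ioi
    simp only [Pi.sub_apply]
    ring
  have habs : IntegrableOn (fun t => |Real.exp (-(lam * t)) * (w t (x + v) - w t x)|)
      (Set.Ioi (0:ℝ)) := hfd.abs
  have hsub1 : Set.Ioc (0:ℝ) T ⊆ Set.Ioi 0 := fun t ht => ht.1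
  have hsub2 : Set.Ioi T ⊆ Set.Ioi (0:ℝ) := Set.Ioi_subset_Ioi hT0.le
  -- integrable dominators on the two pieces
  have hrint : IntegrableOn (fun t : ℝ => t ^ (θ / 2 - 1)) (Set.Ioc 0 T) := by
    have := intervalIntegral.intervalIntegrable_rpow' (a := 0) (b := T) hs1
    rwa [intervalIntegrable_iff_integrableOn_Ioc_of_le hT0.le] at this
  have hcint : IntegrableOn (fun _ : ℝ => (1:ℝ)) (Set.Ioc 0 T) :=
    integrableOn_const measure_Ioc_lt_top.ne enorm_ne_top
  have hg1 : IntegrableOn (fun t : ℝ => 2 * K * (t ^ (θ / 2 - 1) + 1)) (Set.Ioc 0 T) :=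
    (hrint.add hcint).const_mul (2 * K)
  have hg2a : IntegrableOn (fun t : ℝ => t ^ p) (Set.Ioi T) :=
    integrableOn_Ioi_rpow_of_lt hp hT0
  have hg2b : IntegrableOn (fun t : ℝ => Real.exp (-(lam * t))) (Set.Ioi T) := by
    simpa [neg_mul] using exp_neg_integrableOn_Ioi T hlam
  have hg2 : IntegrableOn (fun t : ℝ => K * ‖v‖ * (t ^ p + Real.exp (-(lam * t))))
      (Set.Ioi T) := (hg2a.add hg2b).const_mul (K * ‖v‖)
  -- part 1 bound
  have part1 : ∫ t in Set.Ioc (0:ℝ) T, |Real.exp (-(lam * t)) * (w t (x + v) - w t x)|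
      ≤ 2 * K * (V * (2 / θ) + V) := by
    have step : ∫ t in Set.Ioc (0:ℝ) T, |Real.exp (-(lam * t)) * (w t (x + v) - w t x)|
        ≤ ∫ t in Set.Ioc (0:ℝ) T, 2 * K * (t ^ (θ / 2 - 1) + 1) := by
      refine setIntegral_mono_on (habs.mono_set hsub1) hg1 measurableSet_Ioc ?_
      intro t ht
      have ht0 : 0 < t := ht.1
      have hexp0 := Real.exp_pos (-(lam * t))
      have hexp1 : Real.exp (-(lam * t)) ≤ 1 := myexp_le_one (by nlinarith)
      have h1 := hbound t ht0 (x + v)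
      have h2 := hbound t ht0 x
      have htri : |w t (x + v) - w t x| ≤ |w t (x + v)| + |w t x| := by
        simpa [Real.norm_eq_abs] using norm_sub_le (w t (x + v)) (w t x)
      rw [abs_mul, abs_of_pos hexp0]
      calc Real.exp (-(lam * t)) * |w t (x + v) - w t x|
          ≤ 1 * |w t (x + v) - w t x| :=
            mul_le_mul_of_nonneg_right hexp1 (abs_nonneg _)
        _ ≤ 2 * K * (t ^ (θ / 2 - 1) + 1) := by linarith
    have hval : ∫ t in Set.Ioc (0:ℝ) T, 2 * K * (t ^ (θ / 2 - 1) + 1)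
        = 2 * K * (T ^ (θ / 2) / (θ / 2) + T) := by
      rw [integral_const_mul, integral_add hrint hcint]
      have h1 : ∫ t in Set.Ioc (0:ℝ) T, t ^ (θ / 2 - 1) = T ^ (θ / 2) / (θ / 2) := by
        rw [← intervalIntegral.integral_of_le hT0.le, integral_rpow (Or.inl hs1)]
        rw [Real.zero_rpow (by intro hcon; nlinarith : θ / 2 - 1 + 1 ≠ 0), sub_zero,
          show θ / 2 - 1 + 1 = θ / 2 by ring]
      have h2 : ∫ _t in Set.Ioc (0:ℝ) T, (1:ℝ) = T := by
        simp [Real.volume_Ioc, ENNReal.toReal_ofReal hT0.le, hT0.le]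
      rw [h1, h2]
    rw [hval] at step
    refine step.trans ?_
    have : T ^ (θ / 2) / (θ / 2) = V * (2 / θ) := by rw [hA]; field_simp
    rw [this]
    nlinarith
  -- part 2 bound
  have part2 : ∫ t in Set.Ioi T, |Real.exp (-(lam * t)) * (w t (x + v) - w t x)|
      ≤ K * (V * (2 / (2 * (h : ℝ) + 1 - θ)) + V * (1 / lam)) := by
    have step : ∫ t in Set.Ioi T, |Real.exp (-(lam * t)) * (w t (x + v) - w t x)|
        ≤ ∫ t in Set.Ioi T, K * ‖v‖ * (t ^ p + Real.exp (-(lam * t))) := by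
      refine setIntegral_mono_on (habs.mono_set hsub2) hg2 measurableSet_Ioi ?_
      intro t ht
      have ht0 : 0 < t := hT0.trans ht
      have hexp0 := Real.exp_pos (-(lam * t))
      have hexp1 : Real.exp (-(lam * t)) ≤ 1 := myexp_le_one (by nlinarith)
      have hl := hlip t ht0 x v hvE
      have hrp0 : (0:ℝ) ≤ t ^ p := Real.rpow_nonneg ht0.le p
      rw [abs_mul, abs_of_pos hexp0]
      calc Real.exp (-(lam * t)) * |w t (x + v) - w t x|
          ≤ Real.exp (-(lam * t)) * (K * (t ^ p + 1) * ‖v‖) :=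
            mul_le_mul_of_nonneg_left hl hexp0.le
        _ ≤ K * ‖v‖ * (t ^ p + Real.exp (-(lam * t))) := by
            nlinarith [mul_nonneg (mul_nonneg hK.le (norm_nonneg v))
              (sub_nonneg.2 (mul_le_of_le_one_left hrp0 hexp1))]
    have hval : ∫ t in Set.Ioi T, K * ‖v‖ * (t ^ p + Real.exp (-(lam * t)))
        = K * ‖v‖ * (-T ^ (p + 1) / (p + 1) + lam⁻¹ * Real.exp (-(lam * T))) := by
      rw [integral_const_mul, integral_add hg2a hg2b,
        integral_Ioi_rpow_of_lt hp hT0]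
      congr 1
      have := MeasureTheory.integral_comp_mul_left_Ioi (fun y => Real.exp (-y)) T hlam
      simp only [smul_eq_mul] at this
      rw [this, integral_exp_neg_Ioi]
    rw [hval] at step
    refine step.trans ?_
    have hq : (0:ℝ) < -(p + 1) := by linarith
    have hExpT : Real.exp (-(lam * T)) ≤ 1 := myexp_le_one (by nlinarith)
    have hExpT0 := Real.exp_pos (-(lam * T))
    have e1 : K * ‖v‖ * (-T ^ (p + 1) / (p + 1))
        = K * (‖v‖ * T ^ (p + 1)) * (1 / (-(p + 1))) := by
      rw [neg_div, ← div_neg]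
      ring
    have e2 : (1:ℝ) / (-(p + 1)) = 2 / (2 * (h : ℝ) + 1 - θ) := by
      rw [show -(p + 1) = (2 * (h : ℝ) + 1 - θ) / 2 by rw [hpdef]; ring, one_div_div]
    have e3 : K * ‖v‖ * (lam⁻¹ * Real.exp (-(lam * T))) ≤ K * V * (1 / lam) := by
      have h1 : ‖v‖ * Real.exp (-(lam * T)) ≤ V := by
        calc ‖v‖ * Real.exp (-(lam * T)) ≤ ‖v‖ * 1 :=
              mul_le_mul_of_nonneg_left hExpT (norm_nonneg v)
          _ = ‖v‖ := mul_one _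
          _ ≤ V := hD
      calc K * ‖v‖ * (lam⁻¹ * Real.exp (-(lam * T)))
          = K * (‖v‖ * Real.exp (-(lam * T))) * (1 / lam) := by ring
        _ ≤ K * V * (1 / lam) := by
            apply mul_le_mul_of_nonneg_right _ (by positivity)
            exact mul_le_mul_of_nonneg_left h1 hK.le
    calc K * ‖v‖ * (-T ^ (p + 1) / (p + 1) + lam⁻¹ * Real.exp (-(lam * T)))
        = K * ‖v‖ * (-T ^ (p + 1) / (p + 1)) + K * ‖v‖ * (lam⁻¹ * Real.exp (-(lam * T))) := by
          ring
      _ ≤ K * V * (2 / (2 * (h : ℝ) + 1 - θ)) + K * V * (1 / lam) := by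
          rw [e1, e2, hC]
          exact add_le_add le_rfl e3
      _ = K * (V * (2 / (2 * (h : ℝ) + 1 - θ)) + V * (1 / lam)) := by ring
  -- assemble
  rw [← integral_sub (key (x + v)) (key x)]
  simp only [← mul_sub]
  calc |∫ t in Set.Ioi (0:ℝ), Real.exp (-(lam * t)) * (w t (x + v) - w t x)|
      ≤ ∫ t in Set.Ioi (0:ℝ), |Real.exp (-(lam * t)) * (w t (x + v) - w t x)| := by
        have := MeasureTheory.norm_integral_le_integral_norm
            (μ := volume.restrict (Set.Ioi (0:ℝ)))
            (fun t => Real.exp (-(lam * t)) * (w t (x + v) - w t x))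
        simp only [Real.norm_eq_abs] at this
        exact this
    _ = (∫ t in Set.Ioc (0:ℝ) T, |Real.exp (-(lam * t)) * (w t (x + v) - w t x)|)
        + ∫ t in Set.Ioi T, |Real.exp (-(lam * t)) * (w t (x + v) - w t x)| := by
        rw [← Set.Ioc_union_Ioi_eq_Ioi hT0.le,
          setIntegral_union (Set.Ioc_disjoint_Ioi le_rfl) measurableSet_Ioi
            (habs.mono_set hsub1) (habs.mono_set hsub2)]
    _ ≤ 2 * K * (V * (2 / θ) + V)
        + K * (V * (2 / (2 * (h : ℝ) + 1 - θ)) + V * (1 / lam)) := add_le_add part1 part2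
    _ = (2 * (2 / θ + 1) + 2 / (2 * (h : ℝ) + 1 - θ) + 1 / lam) * K * V := by ring


end
end

section
/- Let θ ∈ (0,1), λ > 0, K > 0, h ≥ 1 an integer, and E a linear subspace of ℝⁿ. Let w : (0,∞) × ℝⁿ → ℝ be such that t ↦ w(t,x) is measurable for every x, sup_{t>0, x∈ℝⁿ} |w(t,x)| ≤ K, and for all t > 0, x ∈ ℝⁿ and v ∈ E with |v| ≤ 1: (a) |w(t,x+v) − w(t,x)| ≤ K |v|^{θ/(2h+1)}, and (b) |w(t,x+v) − w(t,x)| ≤ K ( t^{θ/2 − 1/2 − h} + 1 ) |v|. Then U(x) = ∫₀^∞ e^{−λt} w(t,x) dt converges absolutely for every x, and there exists a constant C depending only on θ, λ and h such that |U(x+v) − U(x)| ≤ C K |v|^{(2+θ)/(2h+1)} for all x ∈ ℝⁿ and all v ∈ E with 0 < |v| ≤ 1. -/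
open MeasureTheory

noncomputable section

/-- Abstract integral estimate behind the `(2+θ)`-Hölder regularity of the
resolvent in the non-elliptic directions: if `|w| ≤ K`, and for `v ∈ E` with `|v| ≤ 1` both
`|w(t,x+v) − w(t,x)| ≤ K|v|^{θ/(2h+1)}` and
`|w(t,x+v) − w(t,x)| ≤ K(t^{θ/2−1/2−h} + 1)|v|`, then
`U(x) = ∫₀^∞ e^{−λt} w(t,x) dt` converges absolutely and
`|U(x+v) − U(x)| ≤ C K |v|^{(2+θ)/(2h+1)}` for `v ∈ E` with `0 < |v| ≤ 1`, where `C`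
depends only on `θ`, `λ` and `h`. -/
theorem stmt19 (θ lam : ℝ) (hθ0 : 0 < θ) (hθ1 : θ < 1) (hlam : 0 < lam)
    (h : ℕ) (hh : 1 ≤ h) :
    ∃ C : ℝ, 0 < C ∧
      ∀ (n : ℕ) (E : Submodule ℝ (En n)) (K : ℝ), 0 < K →
      ∀ w : ℝ → En n → ℝ,
      (∀ x, AEMeasurable (fun t => w t x) (volume.restrict (Set.Ioi (0 : ℝ)))) →
      (∀ t : ℝ, 0 < t → ∀ x, |w t x| ≤ K) →
      (∀ t : ℝ, 0 < t → ∀ x, ∀ v ∈ E, ‖v‖ ≤ 1 →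
        |w t (x + v) - w t x| ≤ K * ‖v‖ ^ (θ / (2 * (h : ℝ) + 1))) →
      (∀ t : ℝ, 0 < t → ∀ x, ∀ v ∈ E, ‖v‖ ≤ 1 →
        |w t (x + v) - w t x| ≤ K * (t ^ (θ / 2 - 1 / 2 - (h : ℝ)) + 1) * ‖v‖) →
      (∀ x, IntegrableOn (fun t => Real.exp (-(lam * t)) * w t x) (Set.Ioi 0)) ∧
      ∀ x : En n, ∀ v ∈ E, 0 < ‖v‖ → ‖v‖ ≤ 1 →
        |(∫ t in Set.Ioi (0 : ℝ), Real.exp (-(lam * t)) * w t (x + v)) -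
            ∫ t in Set.Ioi (0 : ℝ), Real.exp (-(lam * t)) * w t x| ≤
          C * K * ‖v‖ ^ ((2 + θ) / (2 * (h : ℝ) + 1)) := by
  have hh1 : (1 : ℝ) ≤ h := by exact_mod_cast hh
  set H : ℝ := 2 * (h : ℝ) + 1 with hHdef
  have hH3 : (3 : ℝ) ≤ H := by simp only [hHdef]; linarith
  have hHpos : (0 : ℝ) < H := by linarith
  set α : ℝ := θ / 2 - 1 / 2 - (h : ℝ) with hαdef
  have hα : α < -1 := by simp only [hαdef]; linarith
  set d : ℝ := -(α + 1) with hddef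
  have hd : 0 < d := by simp only [hddef]; linarith
  refine ⟨1 + d⁻¹ + lam⁻¹, by positivity, ?_⟩
  intro n E K hK w hw hwb hwa hwlip
  -- integrability of the exponential
  have hexp : IntegrableOn (fun t => Real.exp (-(lam * t))) (Set.Ioi (0 : ℝ)) := by
    simpa [neg_mul] using exp_neg_integrableOn_Ioi 0 hlam
  have hInt : ∀ x, IntegrableOn (fun t => Real.exp (-(lam * t)) * w t x) (Set.Ioi 0) := by
    intro x
    refine Integrable.mono' (hexp.const_mul K) ?_ ?_
    · exact ((Real.continuous_exp.comp (continuous_const.mul continuous_id).neg)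
        |>.aestronglyMeasurable).mul (hw x).aestronglyMeasurable
    · filter_upwards [ae_restrict_mem measurableSet_Ioi] with t ht
      have h1 : |Real.exp (-(lam * t)) * w t x| = Real.exp (-(lam * t)) * |w t x| := by
        rw [abs_mul, abs_of_pos (Real.exp_pos _)]
      rw [Real.norm_eq_abs, h1, mul_comm K]
      exact mul_le_mul_of_nonneg_left (hwb t ht x) (Real.exp_pos _).le
  refine ⟨hInt, ?_⟩
  intro x v hvE hv0 hv1
  set e2 : ℝ := (2 + θ) / H with he2def
  set T : ℝ := ‖v‖ ^ (2 / H) with hTdef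
  have hT : 0 < T := Real.rpow_pos_of_pos hv0 _
  set f : ℝ → ℝ := fun t => Real.exp (-(lam * t)) * (w t (x + v) - w t x) with hfdef
  have hfint : IntegrableOn f (Set.Ioi 0) := by
    have := (hInt (x + v)).sub (hInt x)
    refine this.congr_fun (fun t _ => ?_) measurableSet_Ioi
    simp only [hfdef, Pi.sub_apply, mul_sub]
  have habs1 : IntegrableOn (fun t => |f t|) (Set.Ioc 0 T) :=
    IntegrableOn.mono_set hfint.abs Set.Ioc_subset_Ioi_self
  have habs2 : IntegrableOn (fun t => |f t|) (Set.Ioi T) :=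
    IntegrableOn.mono_set hfint.abs (Set.Ioi_subset_Ioi hT.le)
  have hdiff : (∫ t in Set.Ioi (0 : ℝ), Real.exp (-(lam * t)) * w t (x + v)) -
      ∫ t in Set.Ioi (0 : ℝ), Real.exp (-(lam * t)) * w t x = ∫ t in Set.Ioi (0 : ℝ), f t := by
    rw [← integral_sub (hInt (x + v)) (hInt x)]
    exact integral_congr_ae (Filter.Eventually.of_forall fun t => (mul_sub _ _ _).symm)
  rw [hdiff]
  have habs : |∫ t in Set.Ioi (0 : ℝ), f t| ≤ ∫ t in Set.Ioi (0 : ℝ), |f t| := by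
    simpa [Real.norm_eq_abs] using
      norm_integral_le_integral_norm (μ := volume.restrict (Set.Ioi (0 : ℝ))) f
  have hsplit : ∫ t in Set.Ioi (0 : ℝ), |f t| =
      (∫ t in Set.Ioc (0 : ℝ) T, |f t|) + ∫ t in Set.Ioi T, |f t| := by
    rw [← Set.Ioc_union_Ioi_eq_Ioi hT.le,
      setIntegral_union Set.Ioc_disjoint_Ioi_same measurableSet_Ioi habs1 habs2]
  -- bound on (0, T]
  have hb1 : ∫ t in Set.Ioc (0 : ℝ) T, |f t| ≤ K * ‖v‖ ^ (θ / H) * T := by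
    have hmono : ∫ t in Set.Ioc (0 : ℝ) T, |f t| ≤
        ∫ _ in Set.Ioc (0 : ℝ) T, K * ‖v‖ ^ (θ / H) := by
      refine setIntegral_mono_on habs1 (integrableOn_const (by
        rw [Real.volume_Ioc]; exact ENNReal.ofReal_ne_top)) measurableSet_Ioc ?_
      intro t ht
      have hexp1 : Real.exp (-(lam * t)) ≤ 1 := by
        rw [← Real.exp_zero]
        exact Real.exp_le_exp.2 (by linarith [mul_pos hlam ht.1])
      have h1 : |f t| = Real.exp (-(lam * t)) * |w t (x + v) - w t x| := by
        rw [hfdef]; rw [abs_mul, abs_of_pos (Real.exp_pos _)]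
      rw [h1]
      calc Real.exp (-(lam * t)) * |w t (x + v) - w t x|
          ≤ 1 * (K * ‖v‖ ^ (θ / H)) :=
            mul_le_mul hexp1 (hwa t ht.1 x v hvE hv1) (abs_nonneg _) zero_le_one
        _ = K * ‖v‖ ^ (θ / H) := one_mul _
    rw [setIntegral_const, Real.volume_real_Ioc_of_le (by linarith), smul_eq_mul] at hmono
    calc ∫ t in Set.Ioc (0 : ℝ) T, |f t| ≤ (T - 0) * (K * ‖v‖ ^ (θ / H)) := hmono
      _ = K * ‖v‖ ^ (θ / H) * T := by ring
  -- bound on (T, ∞)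
  have hg_int1 : IntegrableOn (fun t : ℝ => t ^ α) (Set.Ioi T) :=
    integrableOn_Ioi_rpow_of_lt hα hT
  have hg_int2 : IntegrableOn (fun t => Real.exp (-(lam * t))) (Set.Ioi T) :=
    IntegrableOn.mono_set hexp (Set.Ioi_subset_Ioi hT.le)
  have hexpval : ∫ t in Set.Ioi T, Real.exp (-(lam * t)) ≤ lam⁻¹ := by
    have h0 : ∫ t in Set.Ioi (0 : ℝ), Real.exp (-(lam * t)) = lam⁻¹ := by
      have h1 := integral_comp_mul_left_Ioi (fun y => Real.exp (-y)) 0 hlam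
      simp only [mul_zero, integral_exp_neg_Ioi_zero, smul_eq_mul, mul_one] at h1
      exact h1
    rw [← h0]
    exact setIntegral_mono_set hexp
      (Filter.Eventually.of_forall fun t => (Real.exp_pos _).le)
      (Filter.Eventually.of_forall fun t ht => lt_trans hT ht)
  have hrpowval : ∫ t in Set.Ioi T, (t : ℝ) ^ α = T ^ (α + 1) * d⁻¹ := by
    rw [integral_Ioi_rpow_of_lt hα hT, hddef, ← div_eq_mul_inv, div_neg, neg_div]
  have hb2 : ∫ t in Set.Ioi T, |f t| ≤ K * ‖v‖ * (T ^ (α + 1) * d⁻¹ + lam⁻¹) := by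
    have hmono : ∫ t in Set.Ioi T, |f t| ≤
        ∫ t in Set.Ioi T, K * ‖v‖ * (t ^ α + Real.exp (-(lam * t))) := by
      refine setIntegral_mono_on habs2 ((hg_int1.add hg_int2).const_mul _)
        measurableSet_Ioi ?_
      intro t ht
      have ht0 : (0 : ℝ) < t := lt_trans hT ht
      have hexp1 : Real.exp (-(lam * t)) ≤ 1 := by
        rw [← Real.exp_zero]
        exact Real.exp_le_exp.2 (by linarith [mul_pos hlam ht0])
      have hexp0 : (0 : ℝ) < Real.exp (-(lam * t)) := Real.exp_pos _
      have htα : (0 : ℝ) ≤ t ^ α := Real.rpow_nonneg ht0.le _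
      have h1 : |f t| = Real.exp (-(lam * t)) * |w t (x + v) - w t x| := by
        rw [hfdef]; rw [abs_mul, abs_of_pos (Real.exp_pos _)]
      have h2 := hwlip t ht0 x v hvE hv1
      rw [h1]
      have h3 : Real.exp (-(lam * t)) * |w t (x + v) - w t x| ≤
          Real.exp (-(lam * t)) * (K * (t ^ α + 1) * ‖v‖) :=
        mul_le_mul_of_nonneg_left h2 hexp0.le
      refine h3.trans ?_
      have hKv : 0 ≤ K * ‖v‖ := by positivity
      have h4 : Real.exp (-(lam * t)) * (t ^ α + 1) ≤ t ^ α + Real.exp (-(lam * t)) := by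
        have h5 : Real.exp (-(lam * t)) * t ^ α ≤ t ^ α :=
          mul_le_of_le_one_left htα hexp1
        linarith [mul_add (Real.exp (-(lam * t))) (t ^ α) 1,
          mul_one (Real.exp (-(lam * t)))]
      calc Real.exp (-(lam * t)) * (K * (t ^ α + 1) * ‖v‖)
          = (K * ‖v‖) * (Real.exp (-(lam * t)) * (t ^ α + 1)) := by ring
        _ ≤ (K * ‖v‖) * (t ^ α + Real.exp (-(lam * t))) :=
            mul_le_mul_of_nonneg_left h4 hKv
    refine hmono.trans ?_
    rw [MeasureTheory.integral_const_mul, integral_add hg_int1 hg_int2, hrpowval]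
    exact mul_le_mul_of_nonneg_left (add_le_add_right hexpval _) (by positivity)
  -- rpow arithmetic
  have hA1 : ‖v‖ ^ (θ / H) * T = ‖v‖ ^ e2 := by
    rw [hTdef, ← Real.rpow_add hv0]
    congr 1
    rw [he2def]
    field_simp
    ring
  have hA2 : ‖v‖ * T ^ (α + 1) = ‖v‖ ^ e2 := by
    rw [hTdef, ← Real.rpow_mul (norm_nonneg v)]
    nth_rewrite 1 [← Real.rpow_one ‖v‖]
    rw [← Real.rpow_add hv0]
    congr 1
    rw [he2def, hαdef]
    field_simp
    ring
  have hA3 : ‖v‖ ≤ ‖v‖ ^ e2 := by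
    nth_rewrite 1 [← Real.rpow_one ‖v‖]
    refine Real.rpow_le_rpow_of_exponent_ge hv0 hv1 ?_
    rw [he2def, div_le_one hHpos]
    linarith
  have hvpow : 0 < ‖v‖ ^ e2 := Real.rpow_pos_of_pos hv0 _
  calc |∫ t in Set.Ioi (0 : ℝ), f t| ≤ ∫ t in Set.Ioi (0 : ℝ), |f t| := habs
    _ = (∫ t in Set.Ioc (0 : ℝ) T, |f t|) + ∫ t in Set.Ioi T, |f t| := hsplit
    _ ≤ K * ‖v‖ ^ (θ / H) * T + K * ‖v‖ * (T ^ (α + 1) * d⁻¹ + lam⁻¹) :=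
        add_le_add hb1 hb2
    _ ≤ (1 + d⁻¹ + lam⁻¹) * K * ‖v‖ ^ e2 := by
        have e1 : K * ‖v‖ ^ (θ / H) * T = K * ‖v‖ ^ e2 := by rw [mul_assoc, hA1]
        have e2' : K * ‖v‖ * (T ^ (α + 1) * d⁻¹) = K * ‖v‖ ^ e2 * d⁻¹ := by
          rw [mul_assoc K, ← mul_assoc ‖v‖, hA2]; ring
        have e3 : K * ‖v‖ * lam⁻¹ ≤ K * ‖v‖ ^ e2 * lam⁻¹ := by
          have h6 := mul_le_mul_of_nonneg_left hA3 hK.le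
          exact mul_le_mul_of_nonneg_right h6 (by positivity)
        have lhs_eq : K * ‖v‖ ^ (θ / H) * T + K * ‖v‖ * (T ^ (α + 1) * d⁻¹ + lam⁻¹)
            = K * ‖v‖ ^ e2 + K * ‖v‖ ^ e2 * d⁻¹ + K * ‖v‖ * lam⁻¹ := by
          rw [mul_add (K * ‖v‖), e1, e2']; ring
        have rhs_eq : (1 + d⁻¹ + lam⁻¹) * K * ‖v‖ ^ e2
            = K * ‖v‖ ^ e2 + K * ‖v‖ ^ e2 * d⁻¹ + K * ‖v‖ ^ e2 * lam⁻¹ := by ring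
        rw [lhs_eq, rhs_eq]
        linarith
end
end
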